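/- Assume M has no duplicate atoms. Clauses S and M are respectively the side and main premise of subsumption resolution if and only if the direct SAT encoding 𝓔ᵈ_SR(S,M) is satisfiable, where 𝓔ᵈ_SR is the conjunction over Boolean variables b⁺ᵢⱼ, b⁻ᵢⱼ and a substitution σ of: positive compatibility (b⁺ᵢⱼ → Σ⁺ᵢⱼ ⊆ σ), negative compatibility (b⁻ᵢⱼ → Σ⁻ᵢⱼ ⊆ σ), existence (⋁ᵢⱼ b⁻ᵢⱼ), uniqueness (for all i ≤ i' and j < j', ¬b⁻ᵢⱼ ∨ ¬b⁻ᵢ'ⱼ'), completeness (⋀ᵢ ⋁ⱼ (b⁺ᵢⱼ ∨ b⁻ᵢⱼ)), and coherence (for all i, i', j, ¬b⁺ᵢⱼ ∨ ¬b⁻ᵢ'ⱼ). -/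

import Mathlib

/-- First-order terms over variables `V`. -/
inductive Trm (V : Type) : Type
  | var : V → Trm V
  | fn : ℕ → Trm V
  | app : Trm V → Trm V → Trm V
deriving DecidableEq

/-- Applying a (total) substitution to a term. -/
def Trm.subst {V : Type} (σ : V → Trm V) : Trm V → Trm V
  | .var x => σ x
  | .fn f => .fn f
  | .app t u => .app (t.subst σ) (u.subst σ)

/-- A first-order literal: a polarity, a predicate symbol and an argument term. -/
structure Lit (V : Type) where
  pos : Bool
  pred : ℕ
  arg : Trm V
deriving DecidableEq

/-- The complement of a literal. -/
def Lit.neg {V : Type} (l : Lit V) : Lit V := { l with pos := !l.pos }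

/-- Applying a substitution to a literal. -/
def Lit.subst {V : Type} (σ : V → Trm V) (l : Lit V) : Lit V :=
  { l with arg := l.arg.subst σ }

/-- A clause is a multiset of literals. -/
abbrev Clause (V : Type) := Multiset (Lit V)

/-- Applying a substitution to a clause. -/
def Clause.subst {V : Type} (σ : V → Trm V) (C : Clause V) : Clause V :=
  C.map (Lit.subst σ)

/-- `S` subsumes `M`: some substitution maps `S` to a sub-multiset of `M`. -/
def Subsumes {V : Type} (S M : Clause V) : Prop :=
  ∃ σ : V → Trm V, Clause.subst σ S ≤ M

/-- `S` and `M` are side and main premises of subsumption resolution: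
there are `σ`, a nonempty `S' ⊆ S` and `m' ∈ M` with `σ(S') = {¬m'}` and
`σ(S \ S') ⊆ M \ {m'}`. -/
def SubRes {V : Type} [DecidableEq V] (S M : Clause V) : Prop :=
  ∃ (σ : V → Trm V) (S' : Clause V) (m' : Lit V),
    S' ≤ S ∧ S' ≠ 0 ∧ m' ∈ M ∧
    (∀ l ∈ S', Lit.subst σ l = m'.neg) ∧
    (∀ l ∈ S - S', Lit.subst σ l ∈ M.erase m')

/-- Partial substitutions. -/
abbrev PSub (V : Type) := V → Option (Trm V)

/-- Partial application of a partial substitution to a term. -/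
def Trm.psubst {V : Type} (θ : PSub V) : Trm V → Option (Trm V)
  | .var x => θ x
  | .fn f => some (.fn f)
  | .app t u => (t.psubst θ).bind fun t' => (u.psubst θ).map fun u' => .app t' u'

/-- Partial application of a partial substitution to a literal. -/
def Lit.psubst {V : Type} (θ : PSub V) (l : Lit V) : Option (Lit V) :=
  (l.arg.psubst θ).map fun t => { l with arg := t }

/-- `θ ⊆ σ`: the total substitution `σ` extends the partial substitution `θ`. -/
def PSub.le {V : Type} (θ : PSub V) (σ : V → Trm V) : Prop :=
  ∀ x t, θ x = some t → σ x = t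

/-- The clause with literals `s 0, …, s (k-1)`. -/
def clauseOfFn {V : Type} {k : ℕ} (s : Fin k → Lit V) : Clause V :=
  (List.ofFn s : List (Lit V))

/-- The indexed clause `m` has no duplicate literals. -/
def NoDupIdx {V : Type} {n : ℕ} (m : Fin n → Lit V) : Prop :=
  ∀ j j' : Fin n, m j = m j' → j = j'

/-- The indexed clause `m` has no duplicate atoms: no two (distinct) literals are
equal or complementary. -/
def NoDupAtomsIdx {V : Type} {n : ℕ} (m : Fin n → Lit V) : Prop :=
  (∀ j j' : Fin n, m j = m j' → j = j') ∧ (∀ j j' : Fin n, m j ≠ (m j').neg)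

/-- `Sp` is the family of positive matchers `Σ⁺ᵢⱼ`: `Sp i j = some θ` exactly when a
substitution matching `sᵢ` to `mⱼ` exists, in which case `θ` is such a (partial)
matcher and every total match is an extension of it. -/
def IsMatcherFamilyPos {V : Type} {k n : ℕ} (s : Fin k → Lit V) (m : Fin n → Lit V)
    (Sp : Fin k → Fin n → Option (PSub V)) : Prop :=
  (∀ i j θ, Sp i j = some θ → Lit.psubst θ (s i) = some (m j)) ∧
  (∀ i j (σ : V → Trm V), Lit.subst σ (s i) = m j → ∃ θ, Sp i j = some θ ∧ PSub.le θ σ)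

/-- `Sn` is the family of negative matchers `Σ⁻ᵢⱼ` (matching `sᵢ` to `¬mⱼ`). -/
def IsMatcherFamilyNeg {V : Type} {k n : ℕ} (s : Fin k → Lit V) (m : Fin n → Lit V)
    (Sn : Fin k → Fin n → Option (PSub V)) : Prop :=
  (∀ i j θ, Sn i j = some θ → Lit.psubst θ (s i) = some ((m j).neg)) ∧
  (∀ i j (σ : V → Trm V), Lit.subst σ (s i) = (m j).neg → ∃ θ, Sn i j = some θ ∧ PSub.le θ σ)

/-- The (predicate, polarity) header of a literal. -/
def Lit.header {V : Type} (l : Lit V) : ℕ × Bool := (l.pred, l.pos)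

/-- Satisfiability of the direct SAT encoding `𝓔ᵈ_SR(S,M)` of subsumption resolution. -/
def DirectSRSat {V : Type} {k n : ℕ} (s : Fin k → Lit V) (m : Fin n → Lit V)
    (Sp Sn : Fin k → Fin n → Option (PSub V)) : Prop :=
  ∃ (σ : V → Trm V) (bp bn : Fin k → Fin n → Bool),
    -- positive compatibility
    (∀ i j, bp i j = true → ∃ θ, Sp i j = some θ ∧ PSub.le θ σ) ∧
    -- negative compatibility
    (∀ i j, bn i j = true → ∃ θ, Sn i j = some θ ∧ PSub.le θ σ) ∧
    -- existence
    (∃ i j, bn i j = true) ∧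
    -- uniqueness
    (∀ i j i' j', bn i j = true → bn i' j' = true → j = j') ∧
    -- completeness
    (∀ i, ∃ j, bp i j = true ∨ bn i j = true) ∧
    -- coherence
    (∀ i i' j, ¬(bp i j = true ∧ bn i' j = true))

lemma psubst_le_subst {V : Type} {θ : PSub V} {σ : V → Trm V} (h : PSub.le θ σ) :
    ∀ {t t' : Trm V}, Trm.psubst θ t = some t' → Trm.subst σ t = t'
  | .var x, t', ht => by simpa [Trm.psubst, Trm.subst] using h x t' ht
  | .fn f, t', ht => by simp [Trm.psubst] at ht; simp [Trm.subst, ← ht]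
  | .app a b, t', ht => by
      simp only [Trm.psubst, Option.bind_eq_some_iff, Option.map_eq_some_iff] at ht
      obtain ⟨a', ha, b', hb, rfl⟩ := ht
      simp [Trm.subst, psubst_le_subst h ha, psubst_le_subst h hb]

lemma lit_psubst_le_subst {V : Type} {θ : PSub V} {σ : V → Trm V} (h : PSub.le θ σ)
    {l l' : Lit V} (hl : Lit.psubst θ l = some l') : Lit.subst σ l = l' := by
  simp only [Lit.psubst, Option.map_eq_some_iff] at hl
  obtain ⟨t, ht, rfl⟩ := hl
  simp [Lit.subst, psubst_le_subst h ht]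

lemma mem_clauseOfFn {V : Type} {k : ℕ} {s : Fin k → Lit V} {l : Lit V} :
    l ∈ clauseOfFn s ↔ ∃ i, s i = l := by
  simp [clauseOfFn, List.mem_ofFn, Set.range, eq_comm]
/-- Soundness of the direct SAT encoding: with `M` having no duplicate atoms,
`S`, `M` are side and main premises of subsumption resolution iff
`𝓔ᵈ_SR(S,M)` is satisfiable. -/
theorem stmt4 {V : Type} [DecidableEq V] {k n : ℕ} (s : Fin k → Lit V) (m : Fin n → Lit V)
    (hM : NoDupAtomsIdx m)
    (Sp Sn : Fin k → Fin n → Option (PSub V))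
    (hSp : IsMatcherFamilyPos s m Sp) (hSn : IsMatcherFamilyNeg s m Sn) :
    SubRes (clauseOfFn s) (clauseOfFn m) ↔ DirectSRSat s m Sp Sn := by
  have hinj : Function.Injective m := fun j j' h => hM.1 j j' h
  have hnodup : (List.ofFn m).Nodup := List.nodup_ofFn.mpr hinj
  constructor
  · rintro ⟨σ, S', m', hS'le, hS'ne, hm'M, hmap, hrest⟩
    obtain ⟨j₀, hj₀⟩ : ∃ j₀, m j₀ = m' := mem_clauseOfFn.mp hm'M
    have hcount : Multiset.count m' (clauseOfFn m) = 1 := by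
      rw [clauseOfFn, Multiset.coe_count, List.count_eq_one_of_mem hnodup]
      simpa [clauseOfFn] using hm'M
    have hnotmem : m' ∉ (clauseOfFn m).erase m' := by
      rw [← Multiset.count_pos, Multiset.count_erase_self, hcount]
      simp
    -- key: any literal of S not in S' lies in S - S'
    have hsub : ∀ i : Fin k, s i ∉ S' → s i ∈ (clauseOfFn s) - S' := by
      intro i hi
      rw [← Multiset.count_pos, Multiset.count_sub,
        Multiset.count_eq_zero_of_notMem hi, Nat.sub_zero, Multiset.count_pos]
      exact mem_clauseOfFn.mpr ⟨i, rfl⟩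
    refine ⟨σ, fun i j => decide (s i ∉ S' ∧ Lit.subst σ (s i) = m j),
      fun i j => decide (s i ∈ S' ∧ j = j₀), ?_, ?_, ?_, ?_, ?_, ?_⟩
    · intro i j hb
      rw [decide_eq_true_iff] at hb
      exact hSp.2 i j σ hb.2
    · intro i j hb
      rw [decide_eq_true_iff] at hb
      refine hSn.2 i j σ ?_
      rw [hb.2, hj₀]
      exact hmap _ hb.1
    · obtain ⟨l, hl⟩ := Multiset.exists_mem_of_ne_zero hS'ne
      obtain ⟨i, hi⟩ := mem_clauseOfFn.mp (Multiset.mem_of_le hS'le hl)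
      exact ⟨i, j₀, by simp [hi, hl]⟩
    · intro i j i' j' h1 h2
      rw [decide_eq_true_iff] at h1 h2
      rw [h1.2, h2.2]
    · intro i
      by_cases hi : s i ∈ S'
      · exact ⟨j₀, Or.inr (by simp [hi])⟩
      · have := hrest _ (hsub i hi)
        obtain ⟨j, hj⟩ := mem_clauseOfFn.mp (Multiset.mem_of_mem_erase this)
        exact ⟨j, Or.inl (by simp [hi, hj.symm])⟩
    · rintro i i' j ⟨h1, h2⟩
      rw [decide_eq_true_iff] at h1 h2
      have := hrest _ (hsub i h1.1)
      rw [h1.2, h2.2, hj₀] at this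
      exact hnotmem this
  · rintro ⟨σ, bp, bn, hpc, hnc, ⟨i₀, j₀, hb₀⟩, huniq, hcompl, hcoh⟩
    have hbn : ∀ i j, bn i j = true → j = j₀ := fun i j h => huniq i j i₀ j₀ h hb₀
    set P : Fin k → Prop := fun i => bn i j₀ = true with hP
    refine ⟨σ, ((List.finRange k).filter (fun i => bn i j₀)).map s, m j₀, ?_, ?_,
      mem_clauseOfFn.mpr ⟨j₀, rfl⟩, ?_, ?_⟩
    · rw [clauseOfFn, List.ofFn_eq_map]
      exact ((List.filter_sublist).map s).subperm
    · simp only [ne_eq, Multiset.coe_eq_zero, List.map_eq_nil_iff, List.filter_eq_nil_iff]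
      push_neg
      exact ⟨i₀, List.mem_finRange i₀, by simpa using hb₀⟩
    · intro l hl
      simp only [Multiset.mem_coe, List.mem_map, List.mem_filter] at hl
      obtain ⟨i, ⟨-, hi⟩, rfl⟩ := hl
      obtain ⟨θ, hθ, hle⟩ := hnc i j₀ (by simpa using hi)
      exact lit_psubst_le_subst hle (hSn.1 i j₀ θ hθ)
    · intro l hl
      have hsplit : (clauseOfFn s : Clause V) =
          (((List.finRange k).filter (fun i => bn i j₀)).map s : Multiset (Lit V)) +
          (((List.finRange k).filter (fun i => !(bn i j₀))).map s : Multiset (Lit V)) := by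
        rw [clauseOfFn, List.ofFn_eq_map, Multiset.coe_add, ← List.map_append,
          Multiset.coe_eq_coe]
        exact ((List.filter_append_perm _ _).map s).symm
      rw [hsplit, add_tsub_cancel_left] at hl
      simp only [Multiset.mem_coe, List.mem_map, List.mem_filter] at hl
      obtain ⟨i, ⟨-, hi⟩, rfl⟩ := hl
      have hi' : bn i j₀ = false := by simpa using hi
      obtain ⟨j, hj⟩ := hcompl i
      have hjp : bp i j = true := by
        rcases hj with h | h
        · exact h
        · exact absurd (hbn i j h ▸ h) (by simp [hi'])
      have hjne : j ≠ j₀ := by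
        intro h; exact hcoh i i₀ j₀ ⟨h ▸ hjp, hb₀⟩
      obtain ⟨θ, hθ, hle⟩ := hpc i j hjp
      have hsj : Lit.subst σ (s i) = m j := lit_psubst_le_subst hle (hSp.1 i j θ hθ)
      rw [hsj]
      exact (Multiset.mem_erase_of_ne (fun h => hjne (hinj h))).mpr
        (mem_clauseOfFn.mpr ⟨j, rfl⟩)
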